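/- Let $\gamma > 1$ and let positive reals satisfy the supersonic condition $(u_0^-)^2 > \gamma p_0^- /\rho_0^-$. Then the downstream entropy exceeds the upstream entropy: $S_0^+ := p_0^+/(\rho_0^+)^\gamma > p_0^- /(\rho_0^-)^\gamma =: S_0^-$, where $(u_0^+,\rho_0^+,p_0^+)$ is the flat-shock downstream state. -/

import Mathlib

open Real Set

private lemma hasDerivAt_g (γ x : ℝ) (hx : 0 < x)
    (hA : 0 < 2*γ*x - γ + 1) (hC : 0 < (γ-1)*x + 2) :
    HasDerivAt (fun y : ℝ => Real.log (2*γ*y - γ + 1) + γ * Real.log ((γ-1)*y + 2)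
      - γ * Real.log y)
      (2*γ/(2*γ*x - γ + 1) + γ*((γ-1)/((γ-1)*x + 2)) - γ*(1/x)) x := by
  have h1 : HasDerivAt (fun y : ℝ => 2*γ*y - γ + 1) (2*γ) x := by
    simpa using (((hasDerivAt_id x).const_mul (2*γ)).sub_const γ).add_const 1
  have h2 : HasDerivAt (fun y : ℝ => (γ-1)*y + 2) (γ-1) x := by
    simpa using ((hasDerivAt_id x).const_mul (γ-1)).add_const 2
  have l1 : HasDerivAt (fun y : ℝ => Real.log (2*γ*y - γ + 1)) (2*γ/(2*γ*x-γ+1)) x := by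
    exact h1.log hA.ne'
  have l2 : HasDerivAt (fun y : ℝ => Real.log ((γ-1)*y + 2)) ((γ-1)/((γ-1)*x+2)) x := by
    exact h2.log hC.ne'
  have l3 : HasDerivAt Real.log (1/x) x := by
    simpa [one_div] using Real.hasDerivAt_log hx.ne'
  exact (l1.add (l2.const_mul γ)).sub (l3.const_mul γ)

private lemma entropy_key (γ : ℝ) (hγ : 1 < γ) (x : ℝ) (hx : 1 < x) :
    ((γ+1)*x/((γ-1)*x+2)) ^ γ < (2*γ*x - γ + 1)/(γ+1) := by
  set g : ℝ → ℝ := fun y => Real.log (2*γ*y - γ + 1) + γ * Real.log ((γ-1)*y + 2)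
      - γ * Real.log y with hg
  have hpos : ∀ y : ℝ, 1 ≤ y → 0 < y ∧ 0 < 2*γ*y - γ + 1 ∧ 0 < (γ-1)*y + 2 := by
    intro y hy
    refine ⟨by linarith, by nlinarith, by nlinarith⟩
  have hmono : StrictMonoOn g (Set.Ici 1) := by
    apply strictMonoOn_of_deriv_pos (convex_Ici 1)
    · intro y hy
      obtain ⟨h0, hA, hC⟩ := hpos y hy
      exact (hasDerivAt_g γ y h0 hA hC).continuousAt.continuousWithinAt
    · intro y hy
      rw [interior_Ici] at hy
      obtain ⟨h0, hA, hC⟩ := hpos y (le_of_lt hy)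
      rw [(hasDerivAt_g γ y h0 hA hC).deriv]
      have hrw : 2*γ/(2*γ*y - γ + 1) + γ*((γ-1)/((γ-1)*y + 2)) - γ*(1/y)
          = 2*γ*(γ-1)*(y-1)^2 / ((2*γ*y - γ + 1)*(((γ-1)*y + 2)*y)) := by
        have hA' := hA.ne'
        have hC' := hC.ne'
        have h0' := h0.ne'
        rw [mul_div_assoc', mul_one_div, div_add_div _ _ hA' hC', div_sub_div _ _ (mul_ne_zero hA' hC') h0',
          div_eq_div_iff (mul_ne_zero (mul_ne_zero hA' hC') h0') (mul_ne_zero hA' (mul_ne_zero hC' h0'))]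
        ring
      rw [hrw]
      apply div_pos
      · have hy' : 1 < y := hy
        have h1 : 0 < (y-1)^2 := pow_pos (by linarith) 2
        have h2 : 0 < 2*γ*(γ-1) := by nlinarith
        exact mul_pos h2 h1
      · exact mul_pos hA (mul_pos hC h0)
  have hglt : g 1 < g x := hmono (Set.mem_Ici.mpr le_rfl) (le_of_lt hx) hx
  have hγ1 : (0:ℝ) < γ + 1 := by linarith
  obtain ⟨hx0, hA, hC⟩ := hpos x (le_of_lt hx)
  have hZpos : 0 < (γ+1)*x/((γ-1)*x+2) := by positivity
  have hPpos : 0 < (2*γ*x - γ + 1)/(γ+1) := by positivity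
  -- relate g x - g 1 to the logs of the target quantities
  have hlogZ : Real.log ((γ+1)*x/((γ-1)*x+2))
      = Real.log (γ+1) + Real.log x - Real.log ((γ-1)*x+2) := by
    rw [Real.log_div (by positivity) hC.ne', Real.log_mul hγ1.ne' hx0.ne']
  have hlogP : Real.log ((2*γ*x - γ + 1)/(γ+1)) = Real.log (2*γ*x - γ + 1) - Real.log (γ+1) := by
    rw [Real.log_div hA.ne' hγ1.ne']
  have hlt : γ * Real.log ((γ+1)*x/((γ-1)*x+2)) < Real.log ((2*γ*x - γ + 1)/(γ+1)) := by
    rw [hlogZ, hlogP]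
    simp only [hg] at hglt
    have e1 : 2*γ*1 - γ + 1 = γ + 1 := by ring
    have e2 : (γ-1)*(1:ℝ) + 2 = γ + 1 := by ring
    rw [e1, e2, Real.log_one] at hglt
    nlinarith [hglt]
  calc ((γ+1)*x/((γ-1)*x+2)) ^ γ
      = Real.exp (γ * Real.log ((γ+1)*x/((γ-1)*x+2))) := by
        rw [Real.rpow_def_of_pos hZpos, mul_comm]
    _ < Real.exp (Real.log ((2*γ*x - γ + 1)/(γ+1))) := Real.exp_lt_exp.mpr hlt
    _ = (2*γ*x - γ + 1)/(γ+1) := Real.exp_log hPpos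

theorem flat_shock_entropy_increase
    (γ um ρm pm uP ρP pP : ℝ)
    (hγ : 1 < γ) (hum : 0 < um) (hρm : 0 < ρm) (hpm : 0 < pm)
    (hsup : γ * pm / ρm < um ^ 2)
    (huP : uP = 2 * (γ - 1) / ((γ + 1) * um) * (um ^ 2 / 2 + γ * pm / ((γ - 1) * ρm)))
    (hρP : ρP = ρm * um / uP)
    (hpP : pP = ρm * um ^ 2 + pm - ρP * uP ^ 2) :
    pm / ρm ^ γ < pP / ρP ^ γ := by
  have hγ0 : (0:ℝ) < γ := by linarith
  have hγ1 : (0:ℝ) < γ + 1 := by linarith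
  have hγm1 : (0:ℝ) < γ - 1 := by linarith
  set x : ℝ := um ^ 2 * ρm / (γ * pm) with hxdef
  have hx1 : 1 < x := by
    rw [hxdef, lt_div_iff₀ (by positivity)]
    rw [div_lt_iff₀ hρm] at hsup
    nlinarith
  have hx0 : 0 < x := by linarith
  have hC : 0 < (γ-1)*x + 2 := by positivity
  have hA : 0 < 2*γ*x - γ + 1 := by nlinarith
  have huP' : uP = um * ((γ-1)*x + 2) / ((γ+1)*x) := by
    rw [huP, hxdef]
    field_simp
  have huPpos : 0 < uP := by rw [huP']; positivity
  have hρP' : ρP = ρm * ((γ+1)*x / ((γ-1)*x + 2)) := by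
    rw [hρP, huP']
    field_simp
  have hρPpos : 0 < ρP := by rw [hρP']; positivity
  have hpP' : pP = pm * ((2*γ*x - γ + 1)/(γ+1)) := by
    rw [hpP, hρP', huP', hxdef]
    field_simp
    ring
  have hkey := entropy_key γ hγ x hx1
  have hZpos : 0 < (γ+1)*x/((γ-1)*x+2) := by positivity
  rw [hρP', hpP', Real.mul_rpow hρm.le hZpos.le]
  have hr1 : 0 < ρm ^ γ := Real.rpow_pos_of_pos hρm γ
  have hr2 : 0 < ((γ+1)*x/((γ-1)*x+2)) ^ γ := Real.rpow_pos_of_pos hZpos γ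
  rw [div_lt_div_iff₀ hr1 (by positivity)]
  nlinarith [mul_pos (mul_pos hpm hr1) (sub_pos.mpr hkey)]
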